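/- The number of consecutive equi-n-squares |Σ_n| satisfies |Σ_n| ∼ 4n·(n²−n)!/((n−1)!)^n as n → ∞; that is, the ratio |Σ_n| · ((n−1)!)^n / (4n·(n²−n)!) tends to 1 as n → ∞. -/

import Mathlib

open Nat Finset Filter

/-- An equi-`n`-square: an `n × n` array with entries in `Fin n` in which
every value appears exactly `n` times. -/
def IsEquiSquare (n : ℕ) (g : Fin n → Fin n → Fin n) : Prop :=
  ∀ k : Fin n, Nat.card {p : Fin n × Fin n // g p.1 p.2 = k} = n

/-- Row `i` is consecutive (1-indexed: entry in column `j` is `j`). -/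
def RowConsec {n : ℕ} (g : Fin n → Fin n → Fin n) (i : Fin n) : Prop :=
  ∀ j : Fin n, g i j = j

/-- Row `i` is reverse-consecutive (1-indexed: entry in column `j` is `n+1-j`). -/
def RowRevConsec {n : ℕ} (g : Fin n → Fin n → Fin n) (i : Fin n) : Prop :=
  ∀ j : Fin n, (g i j : ℕ) + (j : ℕ) + 1 = n

/-- Column `j` is consecutive (1-indexed: entry in row `i` is `i`). -/
def ColConsec {n : ℕ} (g : Fin n → Fin n → Fin n) (j : Fin n) : Prop :=
  ∀ i : Fin n, g i j = i

/-- Column `j` is reverse-consecutive (1-indexed: entry in row `i` is `n+1-i`). -/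
def ColRevConsec {n : ℕ} (g : Fin n → Fin n → Fin n) (j : Fin n) : Prop :=
  ∀ i : Fin n, (g i j : ℕ) + (i : ℕ) + 1 = n

/-- A consecutive equi-`n`-square: an equi-`n`-square with at least one consecutive or
reverse-consecutive row or column. -/
def IsConsecEquiSquare (n : ℕ) (g : Fin n → Fin n → Fin n) : Prop :=
  IsEquiSquare n g ∧
    ((∃ i : Fin n, RowConsec g i ∨ RowRevConsec g i) ∨
      (∃ j : Fin n, ColConsec g j ∨ ColRevConsec g j))

section Multinomial
variable {α ι : Type*} [Fintype α] [DecidableEq α] [Fintype ι] [DecidableEq ι]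

lemma card_fiber_mul_prod_factorial (c : ι → ℕ) (f₀ : α → ι)
    (h₀ : ∀ i, Nat.card {a // f₀ a = i} = c i) :
    Nat.card {f : α → ι // ∀ i, Nat.card {a // f a = i} = c i} * ∏ i, (c i)! =
      (Fintype.card α)! := by
  classical
  set S := {f : α → ι // ∀ i, Nat.card {a // f a = i} = c i} with hS
  have E : Equiv.Perm α ≃ Σ f : S, {σ : Equiv.Perm α // f₀ ∘ σ = f.1} := by
    refine ⟨fun σ => ⟨⟨f₀ ∘ σ, fun i => ?_⟩, ⟨σ, rfl⟩⟩, fun x => x.2.1, fun σ => rfl, ?_⟩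
    · rw [← h₀ i]
      exact Nat.card_congr (σ.subtypeEquiv fun a => Iff.rfl)
    · rintro ⟨⟨f, hf⟩, ⟨σ, hσ⟩⟩
      dsimp at hσ
      subst hσ
      rfl
  have hfix : ∀ f : S, Nat.card {σ : Equiv.Perm α // f₀ ∘ σ = f.1} = ∏ i, (c i)! := by
    intro f
    have e : ∀ i, {a // f.1 a = i} ≃ {a // f₀ a = i} := fun i =>
      Fintype.equivOfCardEq (by
        rw [← Nat.card_eq_fintype_card, ← Nat.card_eq_fintype_card, f.2 i, h₀ i])
    set τ : α ≃ α := Equiv.ofFiberEquiv e with hτ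
    have hτm : ∀ a, f₀ (τ a) = f.1 a := Equiv.ofFiberEquiv_map e
    have E2 : {σ : Equiv.Perm α // f₀ ∘ σ = f.1} ≃ {σ : Equiv.Perm α // f₀ ∘ σ = f₀} := by
      refine ⟨fun σ => ⟨τ.symm.trans σ.1, funext fun a => ?_⟩,
        fun ρ => ⟨τ.trans ρ.1, funext fun a => ?_⟩, fun σ => ?_, fun ρ => ?_⟩
      · have := congrFun σ.2 (τ.symm a)
        simp only [Function.comp_apply, Equiv.trans_apply] at this ⊢
        rw [this, ← hτm (τ.symm a), Equiv.apply_symm_apply]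
      · have := congrFun ρ.2 (τ a)
        simp only [Function.comp_apply, Equiv.trans_apply] at this ⊢
        rw [this, hτm]
      · ext a
        simp
      · ext a
        simp
    rw [Nat.card_congr E2, Nat.card_eq_fintype_card]
    have := DomMulAct.stabilizer_card (f := f₀)
    rw [this]
    exact Finset.prod_congr rfl fun i _ => by
      rw [← h₀ i, Nat.card_eq_fintype_card]
  have hcard : Nat.card (Equiv.Perm α) = (Fintype.card α)! := by
    rw [Nat.card_eq_fintype_card, Fintype.card_perm]
  rw [← hcard, Nat.card_congr E]
  letI : Fintype S := Fintype.ofFinite S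
  letI : ∀ f : S, Fintype {σ : Equiv.Perm α // f₀ ∘ σ = f.1} := fun f => Fintype.ofFinite _
  have hR : Nat.card ((f : S) × {σ : Equiv.Perm α // f₀ ∘ σ = f.1}) =
      Fintype.card S * ∏ i, (c i)! := by
    rw [Nat.card_eq_fintype_card, Fintype.card_sigma]
    have : ∀ f : S, Fintype.card {σ : Equiv.Perm α // f₀ ∘ σ = f.1} = ∏ i, (c i)! := fun f => by
      rw [← Nat.card_eq_fintype_card, hfix f]
    simp_rw [this]
    rw [Finset.sum_const, smul_eq_mul, Finset.card_univ]
  rw [hR, Nat.card_eq_fintype_card]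

lemma card_fiber_mul_prod_factorial_le (c : ι → ℕ) :
    Nat.card {f : α → ι // ∀ i, Nat.card {a // f a = i} = c i} * ∏ i, (c i)! ≤
      (Fintype.card α)! := by
  by_cases h : Nonempty {f : α → ι // ∀ i, Nat.card {a // f a = i} = c i}
  · obtain ⟨f₀, hf₀⟩ := h
    exact le_of_eq (card_fiber_mul_prod_factorial c f₀ hf₀)
  · rw [not_nonempty_iff] at h
    rw [Nat.card_of_isEmpty]
    simp only [zero_mul, Nat.zero_le]

end Multinomial

section Grid
variable {n : ℕ}

/-- count of value `k` in the array -/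
def cnt (g : Fin n → Fin n → Fin n) (k : Fin n) : ℕ :=
  (univ.filter fun p : Fin n × Fin n => g p.1 p.2 = k).card

lemma natcard_fiber (g : Fin n → Fin n → Fin n) (k : Fin n) :
    Nat.card {p : Fin n × Fin n // g p.1 p.2 = k} = cnt g k := by
  rw [Nat.card_eq_fintype_card, Fintype.card_subtype, cnt]

lemma equi_iff_cnt (g : Fin n → Fin n → Fin n) :
    IsEquiSquare n g ↔ ∀ k, cnt g k = n := by
  unfold IsEquiSquare
  simp_rw [natcard_fiber]

lemma filter_split {γ : Type*} [Fintype γ] (P Q : γ → Prop) [DecidablePred P] [DecidablePred Q] :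
    (univ.filter P).card =
      (univ.filter fun x => Q x ∧ P x).card + (univ.filter fun x => ¬Q x ∧ P x).card := by
  have h := Finset.card_filter_add_card_filter_not (s := univ.filter P) (p := Q)
  rw [Finset.filter_filter, Finset.filter_filter] at h
  rw [← h]
  congr 1
  · congr 1; ext x; simp [and_comm]
  · congr 1; ext x; simp [and_comm]

/-- count of value k in row i, when row i is given by bijection v -/
lemma card_filter_row (g : Fin n → Fin n → Fin n) (i : Fin n) (v : Fin n ≃ Fin n)
    (hv : ∀ j, g i j = v j) (k : Fin n) (W : Fin n × Fin n → Prop) [DecidablePred W]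
    (hW : ∀ p : Fin n × Fin n, W p ↔ (p.1 = i ∧ g p.1 p.2 = k)) :
    (univ.filter W).card = 1 := by
  have : univ.filter W = {(i, v.symm k)} := by
    ext ⟨a, b⟩
    simp only [mem_filter, mem_univ, true_and, mem_singleton, Prod.mk.injEq, hW]
    constructor
    · rintro ⟨rfl, hg⟩
      refine ⟨rfl, ?_⟩
      rw [hv] at hg
      rw [← hg, Equiv.symm_apply_apply]
    · rintro ⟨rfl, rfl⟩
      exact ⟨rfl, by rw [hv, Equiv.apply_symm_apply]⟩
  rw [this, card_singleton]

/-- count of value k in column j off row i, when col j is given by w -/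
lemma card_filter_col (g : Fin n → Fin n → Fin n) (i j : Fin n) (w : Fin n ≃ Fin n)
    (hw : ∀ a, g a j = w a) (k : Fin n) (W : Fin n × Fin n → Prop) [DecidablePred W]
    (hW : ∀ p : Fin n × Fin n, W p ↔ (¬p.1 = i ∧ p.2 = j ∧ g p.1 p.2 = k)) :
    (univ.filter W).card = if k = w i then 0 else 1 := by
  split_ifs with h
  · rw [Finset.card_eq_zero, Finset.filter_eq_empty_iff]
    rintro ⟨a, b⟩ -
    rw [hW]
    rintro ⟨hai, rfl, hg⟩
    rw [hw] at hg
    exact hai (w.injective (hg.trans h))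
  · have : univ.filter W = {(w.symm k, j)} := by
      ext ⟨a, b⟩
      simp only [mem_filter, mem_univ, true_and, mem_singleton, Prod.mk.injEq, hW]
      constructor
      · rintro ⟨hai, rfl, hg⟩
        rw [hw] at hg
        exact ⟨by rw [← hg, Equiv.symm_apply_apply], rfl⟩
      · rintro ⟨rfl, rfl⟩
        refine ⟨fun hai => h ?_, rfl, by rw [hw, Equiv.apply_symm_apply]⟩
        rw [← hai, Equiv.apply_symm_apply]
    rw [this, card_singleton]

lemma cnt_row_split (g : Fin n → Fin n → Fin n) (i : Fin n) (v : Fin n ≃ Fin n)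
    (hv : ∀ j, g i j = v j) (k : Fin n) :
    cnt g k = (univ.filter fun p : Fin n × Fin n => ¬p.1 = i ∧ g p.1 p.2 = k).card + 1 := by
  rw [cnt, filter_split (P := fun p : Fin n × Fin n => g p.1 p.2 = k)
      (Q := fun p : Fin n × Fin n => p.1 = i),
    card_filter_row g i v hv k _ (fun p => Iff.rfl), add_comm]

lemma cnt_rowrow_split (g : Fin n → Fin n → Fin n) (i i' : Fin n) (hii : i ≠ i')
    (v v' : Fin n ≃ Fin n) (hv : ∀ j, g i j = v j) (hv' : ∀ j, g i' j = v' j) (k : Fin n) :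
    cnt g k =
      (univ.filter fun p : Fin n × Fin n => ¬p.1 = i' ∧ ¬p.1 = i ∧ g p.1 p.2 = k).card + 2 := by
  rw [cnt_row_split g i v hv k,
    filter_split (P := fun p : Fin n × Fin n => ¬p.1 = i ∧ g p.1 p.2 = k)
      (Q := fun p : Fin n × Fin n => p.1 = i'),
    card_filter_row g i' v' hv' k _
      (fun p => ⟨fun h => ⟨h.1, h.2.2⟩, fun h => ⟨h.1, by rw [h.1]; exact Ne.symm hii, h.2⟩⟩)]
  omega

lemma cnt_rowcol_split (g : Fin n → Fin n → Fin n) (i j : Fin n)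
    (v w : Fin n ≃ Fin n) (hv : ∀ b, g i b = v b) (hw : ∀ a, g a j = w a) (k : Fin n) :
    cnt g k =
      (univ.filter fun p : Fin n × Fin n => ¬p.2 = j ∧ ¬p.1 = i ∧ g p.1 p.2 = k).card +
        (if k = w i then 1 else 2) := by
  rw [cnt_row_split g i v hv k,
    filter_split (P := fun p : Fin n × Fin n => ¬p.1 = i ∧ g p.1 p.2 = k)
      (Q := fun p : Fin n × Fin n => p.2 = j),
    card_filter_col g i j w hw k _ (fun p => by tauto)]
  split_ifs <;> omega

lemma natcard_restrict (Pd : Fin n × Fin n → Prop) [DecidablePred Pd]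
    (g : Fin n → Fin n → Fin n) (k : Fin n) :
    Nat.card {q : {p : Fin n × Fin n // Pd p} // g q.1.1 q.1.2 = k} =
      (univ.filter fun p : Fin n × Fin n => Pd p ∧ g p.1 p.2 = k).card := by
  rw [Nat.card_congr (Equiv.subtypeSubtypeEquivSubtypeInter Pd (fun p => g p.1 p.2 = k)),
    Nat.card_eq_fintype_card, Fintype.card_subtype]

end Grid

def rowFiberEquiv (i : Fin n) : {p : Fin n × Fin n // p.1 = i} ≃ Fin n where
  toFun q := q.1.2
  invFun b := ⟨(i, b), rfl⟩
  left_inv := by rintro ⟨⟨a, b⟩, rfl⟩; rfl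
  right_inv b := rfl

lemma card_compl_row (i : Fin n) : Fintype.card {p : Fin n × Fin n // ¬p.1 = i} = n^2 - n := by
  rw [Fintype.card_subtype_compl, Fintype.card_congr (rowFiberEquiv i)]
  simp [sq]

lemma fiber_f0_row (i : Fin n) (k : Fin n) :
    Nat.card {q : {p : Fin n × Fin n // ¬p.1 = i} // q.1.2 = k} = n - 1 := by
  have e : {q : {p : Fin n × Fin n // ¬p.1 = i} // q.1.2 = k} ≃ {a : Fin n // ¬a = i} := by
    refine ⟨fun q => ⟨q.1.1.1, q.1.2⟩, fun a => ⟨⟨(a.1, k), a.2⟩, rfl⟩, ?_, ?_⟩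
    · rintro ⟨⟨⟨a, b⟩, ha⟩, rfl⟩; rfl
    · rintro ⟨a, ha⟩; rfl
  rw [Nat.card_congr e, Nat.card_eq_fintype_card, Fintype.card_subtype_compl,
    Fintype.card_subtype_eq, Fintype.card_fin]

lemma card_row_line (i : Fin n) (v : Fin n ≃ Fin n) :
    Nat.card {g : Fin n → Fin n → Fin n // IsEquiSquare n g ∧ ∀ j, g i j = v j} *
      ((n-1)!)^n = (n^2 - n)! := by
  classical
  have E : {g : Fin n → Fin n → Fin n // IsEquiSquare n g ∧ ∀ j, g i j = v j} ≃
      {f : {p : Fin n × Fin n // ¬p.1 = i} → Fin n //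
        ∀ k, Nat.card {q // f q = k} = n - 1} := by
    refine ⟨fun gp => ⟨fun q => gp.1 q.1.1 q.1.2, fun k => ?_⟩,
      fun f => ⟨fun a b => if h : a = i then v b else f.1 ⟨(a,b), h⟩, ?_, fun j => by simp⟩,
      ?_, ?_⟩
    · have h1 := (equi_iff_cnt _).1 gp.2.1 k
      have h2 := cnt_row_split gp.1 i v gp.2.2 k
      rw [natcard_restrict (fun p => ¬p.1 = i) gp.1 k]
      omega
    · -- equi for extension
      rw [equi_iff_cnt]
      intro k
      set g : Fin n → Fin n → Fin n := fun a b => if h : a = i then v b else f.1 ⟨(a,b), h⟩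
        with hg
      have hrow : ∀ j, g i j = v j := fun j => by simp [hg]
      have h2 := cnt_row_split g i v hrow k
      have h3 : (univ.filter fun p : Fin n × Fin n => ¬p.1 = i ∧ g p.1 p.2 = k).card =
          Nat.card {q : {p : Fin n × Fin n // ¬p.1 = i} // f.1 q = k} := by
        rw [← natcard_restrict (fun p => ¬p.1 = i) g k]
        exact Nat.card_congr (Equiv.subtypeEquivRight fun q => by
          rw [show g q.1.1 q.1.2 = f.1 q from dif_neg q.2])
      rw [h2, h3, f.2 k]
      have : 1 ≤ n := i.pos
      omega
    · rintro ⟨g, hg1, hg2⟩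
      apply Subtype.ext
      funext a b
      dsimp
      split_ifs with h
      · subst h; exact (hg2 b).symm
      · rfl
    · rintro ⟨f, hf⟩
      apply Subtype.ext
      funext q
      exact dif_neg q.2
  rw [Nat.card_congr E]
  have key := card_fiber_mul_prod_factorial (α := {p : Fin n × Fin n // ¬p.1 = i})
    (ι := Fin n) (fun _ => n - 1) (fun q => q.1.2) (fiber_f0_row i)
  rw [Finset.prod_const, Finset.card_univ, Fintype.card_fin, card_compl_row i] at key
  exact key

def fstSubtypeEquiv {A B : Type*} (P : A → Prop) : {p : A × B // P p.1} ≃ {a // P a} × B where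
  toFun q := (⟨q.1.1, q.2⟩, q.1.2)
  invFun x := ⟨(x.1.1, x.2), x.1.2⟩
  left_inv := by rintro ⟨⟨a, b⟩, h⟩; rfl
  right_inv := by rintro ⟨⟨a, h⟩, b⟩; rfl

lemma card_two_compl {n : ℕ} (i i' : Fin n) (hii : ¬i = i') :
    Fintype.card {a : Fin n // ¬a = i' ∧ ¬a = i} = n - 2 := by
  rw [Fintype.card_subtype]
  have : (univ.filter fun a : Fin n => ¬a = i' ∧ ¬a = i) = univ \ {i', i} := by
    ext a; simp [mem_sdiff]
  rw [this, card_sdiff_of_subset (subset_univ _), Finset.card_univ, Fintype.card_fin,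
    card_insert_of_notMem (by simpa using fun h : i' = i => hii h.symm), card_singleton]

lemma filter_and_assoc {γ : Type*} [Fintype γ] (P Q R : γ → Prop)
    [DecidablePred P] [DecidablePred Q] [DecidablePred R] :
    (univ.filter fun x => (P x ∧ Q x) ∧ R x).card =
      (univ.filter fun x => P x ∧ Q x ∧ R x).card := by
  congr 1; ext x; simp [and_assoc]

lemma card_rowrow_le {n : ℕ} (i i' : Fin n) (hii : i ≠ i') (v v' : Fin n ≃ Fin n) :
    Nat.card {g : Fin n → Fin n → Fin n //
        IsEquiSquare n g ∧ (∀ b, g i b = v b) ∧ (∀ b, g i' b = v' b)} *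
      ((n-2)!)^n ≤ (n^2 - 2*n)! := by
  classical
  set α := {p : Fin n × Fin n // ¬p.1 = i' ∧ ¬p.1 = i}
  have hΦ : Function.Injective
      (fun gp : {g : Fin n → Fin n → Fin n //
          IsEquiSquare n g ∧ (∀ b, g i b = v b) ∧ (∀ b, g i' b = v' b)} =>
        (⟨fun q : α => gp.1 q.1.1 q.1.2, fun k => by
          have h1 := (equi_iff_cnt _).1 gp.2.1 k
          have h2 := cnt_rowrow_split gp.1 i i' hii v v' gp.2.2.1 gp.2.2.2 k
          rw [natcard_restrict (fun p => ¬p.1 = i' ∧ ¬p.1 = i) gp.1 k, filter_and_assoc]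
          omega⟩ :
          {f : α → Fin n // ∀ k, Nat.card {q // f q = k} = n - 2})) := by
    rintro ⟨g, hg1, hg2, hg3⟩ ⟨g', hg1', hg2', hg3'⟩ h
    have h' := congrArg Subtype.val h
    apply Subtype.ext
    funext a b
    show g a b = g' a b
    by_cases ha : a = i
    · subst ha; rw [hg2, hg2']
    · by_cases ha' : a = i'
      · subst ha'; rw [hg3, hg3']
      · exact congrFun h' ⟨(a, b), ha', ha⟩
  have hle := Nat.card_le_card_of_injective _ hΦ
  have htarget := card_fiber_mul_prod_factorial_le (α := α) (ι := Fin n) (fun _ => n - 2)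
  rw [Finset.prod_const, Finset.card_univ, Fintype.card_fin] at htarget
  have hcard : Fintype.card α = n^2 - 2*n := by
    rw [Fintype.card_congr (fstSubtypeEquiv (fun a : Fin n => ¬a = i' ∧ ¬a = i)),
      Fintype.card_prod, card_two_compl i i' hii, Fintype.card_fin, Nat.sub_mul, pow_two]
  calc Nat.card _ * ((n-2)!)^n ≤
      Nat.card {f : α → Fin n // ∀ k, Nat.card {q // f q = k} = n - 2} * ((n-2)!)^n := by
        exact Nat.mul_le_mul_right _ hle
    _ ≤ (Fintype.card α)! := htarget
    _ = (n^2 - 2*n)! := by rw [hcard]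

lemma card_one_compl {n : ℕ} (i : Fin n) : Fintype.card {a : Fin n // ¬a = i} = n - 1 := by
  rw [Fintype.card_subtype_compl, Fintype.card_subtype_eq, Fintype.card_fin]

def rcSubtypeEquiv {A B : Type*} (P : B → Prop) (Q : A → Prop) :
    {p : A × B // P p.2 ∧ Q p.1} ≃ {b // P b} × {a // Q a} where
  toFun q := (⟨q.1.2, q.2.1⟩, ⟨q.1.1, q.2.2⟩)
  invFun x := ⟨(x.2.1, x.1.1), x.1.2, x.2.2⟩
  left_inv := by rintro ⟨⟨a, b⟩, h⟩; rfl
  right_inv := by rintro ⟨⟨b, hb⟩, ⟨a, ha⟩⟩; rfl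

lemma card_rowcol_le {n : ℕ} (i j : Fin n) (v w : Fin n ≃ Fin n) :
    Nat.card {g : Fin n → Fin n → Fin n //
        IsEquiSquare n g ∧ (∀ b, g i b = v b) ∧ (∀ a, g a j = w a)} *
      ((n-1)! * ((n-2)!)^(n-1)) ≤ ((n-1)*(n-1))! := by
  classical
  set α := {p : Fin n × Fin n // ¬p.2 = j ∧ ¬p.1 = i} with hα
  set c : Fin n → ℕ := fun k => if k = w i then n-1 else n-2 with hc
  have hΦ : Function.Injective
      (fun gp : {g : Fin n → Fin n → Fin n //
          IsEquiSquare n g ∧ (∀ b, g i b = v b) ∧ (∀ a, g a j = w a)} =>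
        (⟨fun q : α => gp.1 q.1.1 q.1.2, fun k => by
          have h1 := (equi_iff_cnt _).1 gp.2.1 k
          have h2 := cnt_rowcol_split gp.1 i j v w gp.2.2.1 gp.2.2.2 k
          rw [natcard_restrict (fun p => ¬p.2 = j ∧ ¬p.1 = i) gp.1 k, filter_and_assoc]
          have hn1 : 1 ≤ n := i.pos
          simp only [hc]
          by_cases h : k = w i
          · rw [if_pos h]; rw [if_pos h] at h2; omega
          · rw [if_neg h]; rw [if_neg h] at h2; omega⟩ :
          {f : α → Fin n // ∀ k, Nat.card {q // f q = k} = c k})) := by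
    rintro ⟨g, hg1, hg2, hg3⟩ ⟨g', hg1', hg2', hg3'⟩ h
    have h' := congrArg Subtype.val h
    apply Subtype.ext
    funext a b
    show g a b = g' a b
    by_cases ha : a = i
    · subst ha; rw [hg2, hg2']
    · by_cases hb : b = j
      · subst hb; rw [hg3, hg3']
      · exact congrFun h' ⟨(a, b), hb, ha⟩
  have hle := Nat.card_le_card_of_injective _ hΦ
  have htarget := card_fiber_mul_prod_factorial_le (α := α) (ι := Fin n) c
  have hprod : ∏ k, (c k)! = (n-1)! * ((n-2)!)^(n-1) := by
    rw [← Finset.mul_prod_erase univ (fun k => (c k)!) (mem_univ (w i))]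
    congr 1
    · simp [hc]
    · have heq : ∀ k ∈ univ.erase (w i), (c k)! = (n-2)! := fun k hk => by
        simp only [hc, if_neg (Finset.ne_of_mem_erase hk)]
      rw [Finset.prod_congr rfl heq, Finset.prod_const,
        Finset.card_erase_of_mem (mem_univ _), Finset.card_univ, Fintype.card_fin]
  have hcard : Fintype.card α = (n-1)*(n-1) := by
    rw [Fintype.card_congr (rcSubtypeEquiv (fun b : Fin n => ¬b = j)
      (fun a : Fin n => ¬a = i)), Fintype.card_prod, card_one_compl, card_one_compl]
  rw [hprod, hcard] at htarget
  calc Nat.card _ * ((n-1)! * ((n-2)!)^(n-1)) ≤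
      Nat.card {f : α → Fin n // ∀ k, Nat.card {q // f q = k} = c k} *
        ((n-1)! * ((n-2)!)^(n-1)) := Nat.mul_le_mul_right _ hle
    _ ≤ ((n-1)*(n-1))! := htarget

lemma equi_transpose {n : ℕ} (g : Fin n → Fin n → Fin n) (h : IsEquiSquare n g) :
    IsEquiSquare n (fun a b => g b a) := by
  intro k
  exact (Nat.card_congr ((Equiv.prodComm (Fin n) (Fin n)).subtypeEquiv
    (fun p => Iff.rfl))).trans (h k)

lemma natcard_equi_transpose {n : ℕ} (P : (Fin n → Fin n → Fin n) → Prop) :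
    Nat.card {g : Fin n → Fin n → Fin n // IsEquiSquare n g ∧ P (fun a b => g b a)} =
      Nat.card {g : Fin n → Fin n → Fin n // IsEquiSquare n g ∧ P g} := by
  apply Nat.card_congr
  refine ⟨fun gp => ⟨fun a b => gp.1 b a, equi_transpose _ gp.2.1, gp.2.2⟩,
    fun gp => ⟨fun a b => gp.1 b a, equi_transpose _ gp.2.1, gp.2.2⟩, ?_, ?_⟩
  · rintro ⟨g, hg⟩; rfl
  · rintro ⟨g, hg⟩; rfl

/-- Bonferroni-type inequality. -/
lemma bonferroni {ι γ : Type*} [DecidableEq ι] [DecidableEq γ] (S : Finset ι)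
    (A : ι → Finset γ) :
    ∑ s ∈ S, (A s).card ≤
      (S.biUnion A).card + ∑ s ∈ S, ∑ t ∈ S.erase s, ((A s) ∩ (A t)).card := by
  classical
  set U := S.biUnion A with hU
  set K : γ → ℕ := fun g => (S.filter fun s => g ∈ A s).card with hK
  have hsub : ∀ s ∈ S, A s ⊆ U := fun s hs => subset_biUnion_of_mem A hs
  have step1 : ∑ s ∈ S, (A s).card = ∑ g ∈ U, K g := by
    have h1 : ∀ s ∈ S, (A s).card = ∑ g ∈ U, (if g ∈ A s then 1 else 0) := by
      intro s hs
      rw [← Finset.card_filter]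
      congr 1
      rw [Finset.filter_mem_eq_inter]
      exact (Finset.inter_eq_right.2 (hsub s hs)).symm
    rw [Finset.sum_congr rfl h1, Finset.sum_comm]
    exact Finset.sum_congr rfl fun g _ => (Finset.card_filter _ _).symm
  have step2 : ∑ s ∈ S, ∑ t ∈ S.erase s, ((A s) ∩ (A t)).card =
      ∑ g ∈ U, K g * (K g - 1) := by
    have h1 : ∀ s ∈ S, ∀ t ∈ S.erase s, ((A s) ∩ (A t)).card =
        ∑ g ∈ U, (if g ∈ A s ∧ g ∈ A t then 1 else 0) := by
      intro s hs t ht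
      have he : A s ∩ A t = U.filter (fun g => g ∈ A s ∧ g ∈ A t) := by
        ext g
        simp only [Finset.mem_inter, Finset.mem_filter]
        exact ⟨fun h => ⟨hsub s hs h.1, h⟩, fun h => h.2⟩
      rw [he, Finset.card_filter]
    calc ∑ s ∈ S, ∑ t ∈ S.erase s, ((A s) ∩ (A t)).card
        = ∑ s ∈ S, ∑ t ∈ S.erase s, ∑ g ∈ U, (if g ∈ A s ∧ g ∈ A t then 1 else 0) := by
          refine Finset.sum_congr rfl fun s hs => Finset.sum_congr rfl fun t ht => h1 s hs t ht
      _ = ∑ g ∈ U, ∑ s ∈ S, ∑ t ∈ S.erase s, (if g ∈ A s ∧ g ∈ A t then 1 else 0) := by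
          rw [Finset.sum_comm]
          exact Finset.sum_congr rfl fun s _ => Finset.sum_comm
      _ = ∑ g ∈ U, K g * (K g - 1) := by
          refine Finset.sum_congr rfl fun g _ => ?_
          have inner : ∀ s ∈ S, (∑ t ∈ S.erase s, (if g ∈ A s ∧ g ∈ A t then 1 else 0)) =
              (if g ∈ A s then K g - 1 else 0) := by
            intro s hs
            by_cases hgs : g ∈ A s
            · rw [if_pos hgs]
              have : ∀ t ∈ S.erase s, (if g ∈ A s ∧ g ∈ A t then 1 else 0) =
                  (if g ∈ A t then 1 else 0) := fun t _ => by simp [hgs]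
              rw [Finset.sum_congr rfl this, ← Finset.card_filter, Finset.filter_erase,
                Finset.card_erase_of_mem]
              exact Finset.mem_filter.2 ⟨hs, hgs⟩
            · rw [if_neg hgs]
              refine Finset.sum_eq_zero fun t _ => by simp [hgs]
          rw [Finset.sum_congr rfl inner, ← Finset.sum_filter, Finset.sum_const, smul_eq_mul]
  have step3 : ∀ g ∈ U, K g ≤ 1 + K g * (K g - 1) := by
    intro g _
    have h : ∀ m : ℕ, m ≤ 1 + m * (m - 1) := by
      intro m
      rcases m with _ | m'
      · simp
      · have h2 : m' ≤ (m' + 1) * m' := Nat.le_mul_of_pos_left m' (by omega)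
        simp only [Nat.succ_sub_one]
        omega
    exact h (K g)
  rw [step1, step2]
  have hU1 : U.card = ∑ g ∈ U, 1 := by simp
  rw [hU1, ← Finset.sum_add_distrib]
  exact Finset.sum_le_sum step3

def lineVal (n : ℕ) : Bool → (Fin n ≃ Fin n)
  | false => Equiv.refl _
  | true => Fin.revPerm

def LineP {n : ℕ} : Bool × Bool × Fin n → (Fin n → Fin n → Fin n) → Prop
  | (false, b, i), g => ∀ y, g i y = lineVal n b y
  | (true, b, j), g => ∀ x, g x j = lineVal n b x

lemma rev_val_iff {n : ℕ} (x j : Fin n) : ((x : ℕ) + (j : ℕ) + 1 = n) ↔ x = Fin.rev j := by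
  have h1 := x.isLt
  have h2 := j.isLt
  rw [Fin.ext_iff, Fin.val_rev]
  omega

lemma consec_iff_line {n : ℕ} (g : Fin n → Fin n → Fin n) :
    IsConsecEquiSquare n g ↔ (IsEquiSquare n g ∧ ∃ s : Bool × Bool × Fin n, LineP s g) := by
  apply and_congr_right'
  constructor
  · rintro (⟨i, hi | hi⟩ | ⟨j, hj | hj⟩)
    · exact ⟨(false, false, i), fun y => hi y⟩
    · exact ⟨(false, true, i), fun y => (rev_val_iff _ _).1 (hi y)⟩
    · exact ⟨(true, false, j), fun x => hj x⟩
    · exact ⟨(true, true, j), fun x => (rev_val_iff _ _).1 (hj x)⟩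
  · rintro ⟨⟨c, b, i⟩, hs⟩
    cases c
    · cases b
      · exact Or.inl ⟨i, Or.inl fun y => hs y⟩
      · exact Or.inl ⟨i, Or.inr fun y => (rev_val_iff _ _).2 (hs y)⟩
    · cases b
      · exact Or.inr ⟨i, Or.inl fun x => hs x⟩
      · exact Or.inr ⟨i, Or.inr fun x => (rev_val_iff _ _).2 (hs x)⟩

lemma natcard_filter {γ : Type*} [Fintype γ] (p : γ → Prop) [DecidablePred p] :
    Nat.card {x // p x} = (univ.filter p).card := by
  rw [Nat.card_eq_fintype_card, Fintype.card_subtype]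

lemma card_line {n : ℕ} (s : Bool × Bool × Fin n) :
    Nat.card {g : Fin n → Fin n → Fin n // IsEquiSquare n g ∧ LineP s g} *
      ((n-1)!)^n = (n^2 - n)! := by
  obtain ⟨c, b, i⟩ := s
  cases c
  · exact card_row_line i (lineVal n b)
  · have h : Nat.card {g : Fin n → Fin n → Fin n //
        IsEquiSquare n g ∧ ∀ x, g x i = lineVal n b x} =
        Nat.card {g : Fin n → Fin n → Fin n //
        IsEquiSquare n g ∧ ∀ y, g i y = lineVal n b y} :=
      natcard_equi_transpose (P := fun g => ∀ y, g i y = lineVal n b y)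
    show Nat.card {g : Fin n → Fin n → Fin n //
        IsEquiSquare n g ∧ ∀ x, g x i = lineVal n b x} * ((n-1)!)^n = (n^2 - n)!
    rw [h]
    exact card_row_line i (lineVal n b)

lemma arith_rr' (m X : ℕ) (h : X * ((m)!)^(m+2) ≤ (m*(m+2))!) :
    X * ((m+1)!)^(m+2) * (m+1)^(m+1) ≤ ((m+1)*(m+2))! := by
  have key : X * ((m+1)!)^(m+2) * (m+1)^(m+1) =
      (X * ((m)!)^(m+2)) * ((m+1)^(2*m+3)) := by
    rw [Nat.factorial_succ, mul_pow, show 2*m+3 = (m+2)+(m+1) by omega, pow_add]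
    ring
  rw [key]
  calc (X * ((m)!)^(m+2)) * ((m+1)^(2*m+3))
      ≤ (m*(m+2))! * ((m+1)^(2*m+3)) := Nat.mul_le_mul_right _ h
    _ ≤ (m*(m+2))! * ((m*(m+2)) + 1)^(m+2) := by
        apply Nat.mul_le_mul_left
        have h1 : (m*(m+2)) + 1 = (m+1)^2 := by ring
        rw [h1, ← pow_mul]
        exact Nat.pow_le_pow_right (by omega) (by omega)
    _ ≤ ((m*(m+2)) + (m+2))! := Nat.factorial_mul_pow_le_factorial
    _ = ((m+1)*(m+2))! := by congr 1; ring

lemma arith_rc' (m X : ℕ) (h : X * ((m+1)! * ((m)!)^(m+1)) ≤ ((m+1)*(m+1))!) :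
    X * ((m+1)!)^(m+2) * (m+1)^(m+1) ≤ ((m+1)*(m+2))! := by
  have key : X * ((m+1)!)^(m+2) * (m+1)^(m+1) =
      (X * ((m+1)! * ((m)!)^(m+1))) * ((m+1)^(2*m+2)) := by
    rw [show m+2 = (m+1)+1 by omega, pow_succ, Nat.factorial_succ, mul_pow,
      show 2*m+2 = (m+1)+(m+1) by omega, pow_add]
    ring
  rw [key]
  calc (X * ((m+1)! * ((m)!)^(m+1))) * ((m+1)^(2*m+2))
      ≤ ((m+1)*(m+1))! * ((m+1)^(2*m+2)) := Nat.mul_le_mul_right _ h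
    _ ≤ ((m+1)*(m+1))! * (((m+1)*(m+1)) + 1)^(m+1) := by
        apply Nat.mul_le_mul_left
        have h1 : (m+1)^(2*m+2) = ((m+1)*(m+1))^(m+1) := by
          rw [show 2*m+2 = 2*(m+1) by omega, pow_mul, sq]
        rw [h1]
        exact Nat.pow_le_pow_left (by omega) _
    _ ≤ (((m+1)*(m+1)) + (m+1))! :=
        Nat.factorial_mul_pow_le_factorial (m := (m+1)*(m+1)) (n := m+1)
    _ = ((m+1)*(m+2))! := by
        rw [show (((m+1)*(m+1)) + (m+1)) = (m+1)*(m+2) from by ring]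

lemma lineVal_ne {n : ℕ} (hn : 2 ≤ n) {b b' : Bool} (hbb : b ≠ b') :
    lineVal n b ⟨0, by omega⟩ ≠ lineVal n b' ⟨0, by omega⟩ := by
  have key : lineVal n true ⟨0, by omega⟩ ≠ lineVal n false ⟨0, by omega⟩ := by
    show Fin.revPerm _ ≠ Equiv.refl _ _
    simp only [Fin.revPerm_apply, Equiv.refl_apply, Ne, Fin.ext_iff, Fin.val_rev]
    omega
  cases b <;> cases b'
  · exact absurd rfl hbb
  · exact fun h => key h.symm
  · exact key
  · exact absurd rfl hbb

lemma card_pair_le {n : ℕ} (hn : 2 ≤ n) (s t : Bool × Bool × Fin n) (hst : s ≠ t) :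
    Nat.card {g : Fin n → Fin n → Fin n // IsEquiSquare n g ∧ LineP s g ∧ LineP t g} *
      ((n-1)!)^n * (n-1)^(n-1) ≤ (n^2 - n)! := by
  obtain ⟨m, rfl⟩ : ∃ m, n = m + 2 := ⟨n - 2, by omega⟩
  have e1 : (m+2)^2 - 2*(m+2) = m*(m+2) := by
    have h1 : (m+2)^2 = m*m+4*m+4 := by ring
    have h2 : m*(m+2) = m*m+2*m := by ring
    omega
  have e2 : (m+2)^2 - (m+2) = (m+1)*(m+2) := by
    have h1 : (m+2)^2 = m*m+4*m+4 := by ring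
    have h2 : (m+1)*(m+2) = m*m+3*m+2 := by ring
    omega
  have harr : ∀ X : ℕ, X * (((m+2)-2)!)^(m+2) ≤ ((m+2)^2 - 2*(m+2))! →
      X * (((m+2)-1)!)^(m+2) * ((m+2)-1)^((m+2)-1) ≤ ((m+2)^2 - (m+2))! := by
    intro X h
    rw [e1] at h
    rw [e2]
    exact arith_rr' m X h
  have hrc : ∀ X : ℕ, X * ((((m+2)-1)!) * (((m+2)-2)!)^((m+2)-1)) ≤
      (((m+2)-1)*((m+2)-1))! →
      X * (((m+2)-1)!)^(m+2) * ((m+2)-1)^((m+2)-1) ≤ ((m+2)^2 - (m+2))! := by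
    intro X h
    rw [e2]
    exact arith_rc' m X h
  obtain ⟨c, b, i⟩ := s
  obtain ⟨c', b', i'⟩ := t
  have hz : (0 : ℕ) < m+2 := by omega
  cases c <;> cases c'
  · -- row, row
    by_cases hii : i = i'
    · subst hii
      have hbb : b ≠ b' := fun hb => hst (by rw [hb])
      have hE : IsEmpty {g : Fin (m+2) → Fin (m+2) → Fin (m+2) //
          IsEquiSquare (m+2) g ∧ LineP (false, b, i) g ∧ LineP (false, b', i) g} := by
        refine ⟨fun gp => lineVal_ne hn hbb ?_⟩
        rw [← gp.2.2.1 ⟨0, hz⟩, ← gp.2.2.2 ⟨0, hz⟩]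
      rw [Nat.card_of_isEmpty]
      simp only [zero_mul, Nat.zero_le]
    · exact harr _ (card_rowrow_le i i' hii (lineVal (m+2) b) (lineVal (m+2) b'))
  · -- row, col
    exact hrc _ (card_rowcol_le i i' (lineVal (m+2) b) (lineVal (m+2) b'))
  · -- col, row : commute the two line conditions
    have hcomm : Nat.card {g : Fin (m+2) → Fin (m+2) → Fin (m+2) //
        IsEquiSquare (m+2) g ∧ LineP (true, b, i) g ∧ LineP (false, b', i') g} =
        Nat.card {g : Fin (m+2) → Fin (m+2) → Fin (m+2) //
        IsEquiSquare (m+2) g ∧ LineP (false, b', i') g ∧ LineP (true, b, i) g} :=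
      Nat.card_congr (Equiv.subtypeEquivRight fun g => by tauto)
    rw [hcomm]
    exact hrc _ (card_rowcol_le i' i (lineVal (m+2) b') (lineVal (m+2) b))
  · -- col, col : transpose
    have htr : Nat.card {g : Fin (m+2) → Fin (m+2) → Fin (m+2) //
        IsEquiSquare (m+2) g ∧ LineP (true, b, i) g ∧ LineP (true, b', i') g} =
        Nat.card {g : Fin (m+2) → Fin (m+2) → Fin (m+2) //
        IsEquiSquare (m+2) g ∧ (∀ y, g i y = lineVal (m+2) b y) ∧ (∀ y, g i' y = lineVal (m+2) b' y)} :=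
      natcard_equi_transpose
        (P := fun g => (∀ y, g i y = lineVal (m+2) b y) ∧ (∀ y, g i' y = lineVal (m+2) b' y))
    rw [htr]
    by_cases hii : i = i'
    · subst hii
      have hbb : b ≠ b' := fun hb => hst (by rw [hb])
      have hE : IsEmpty {g : Fin (m+2) → Fin (m+2) → Fin (m+2) //
          IsEquiSquare (m+2) g ∧ (∀ y, g i y = lineVal (m+2) b y) ∧ (∀ y, g i y = lineVal (m+2) b' y)} := by
        refine ⟨fun gp => lineVal_ne hn hbb ?_⟩
        rw [← gp.2.2.1 ⟨0, hz⟩, ← gp.2.2.2 ⟨0, hz⟩]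
      rw [Nat.card_of_isEmpty]
      simp only [zero_mul, Nat.zero_le]
    · exact harr _ (card_rowrow_le i i' hii (lineVal (m+2) b) (lineVal (m+2) b'))

lemma nsq_le (n : ℕ) (hn : 4 ≤ n) : n^2 ≤ 4*(n-1)^(n-1) := by
  obtain ⟨m, rfl⟩ : ∃ m, n = m + 4 := ⟨n - 4, by omega⟩
  have h1 : (m+4)^2 ≤ 4*(m+3)^3 := by nlinarith
  have h2 : (m+3)^3 ≤ (m+3)^(m+3) := Nat.pow_le_pow_right (by omega) (by omega)
  calc (m+4)^2 ≤ 4*(m+3)^3 := h1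
    _ ≤ 4*(m+3)^(m+3) := by omega
    _ = 4*((m+4)-1)^((m+4)-1) := rfl

lemma main_bounds {n : ℕ} (hn : 2 ≤ n) :
    Nat.card {g : Fin n → Fin n → Fin n // IsConsecEquiSquare n g} * ((n-1)!)^n ≤
      4*n*((n^2-n)!) ∧
    4*n*((n^2-n)!)*(n-1)^(n-1) ≤
      Nat.card {g : Fin n → Fin n → Fin n // IsConsecEquiSquare n g} * ((n-1)!)^n *
        (n-1)^(n-1) + 16*n^2*((n^2-n)!) := by
  classical
  set W := ((n-1)!)^n with hW
  set F := (n^2-n)! with hF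
  set Q := (n-1)^(n-1) with hQ
  set A : Bool × Bool × Fin n → Finset (Fin n → Fin n → Fin n) :=
    fun s => univ.filter fun g => IsEquiSquare n g ∧ LineP s g with hA
  have hU : (univ.biUnion A) = univ.filter (IsConsecEquiSquare n) := by
    ext g
    simp only [mem_biUnion, mem_univ, true_and, mem_filter, hA, consec_iff_line,
      exists_and_left]
  have hN : Nat.card {g : Fin n → Fin n → Fin n // IsConsecEquiSquare n g} =
      (univ.biUnion A).card := by
    rw [natcard_filter, hU]
  have hAs : ∀ s, (A s).card * W = F := by
    intro s
    rw [hA]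
    rw [← natcard_filter (fun g => IsEquiSquare n g ∧ LineP s g)]
    exact card_line s
  have hcard_univ : (univ : Finset (Bool × Bool × Fin n)).card = 4*n := by
    rw [Finset.card_univ]
    simp only [Fintype.card_prod, Fintype.card_bool, Fintype.card_fin]
    ring
  have hsum : (∑ s, (A s).card) * W = 4*n*F := by
    rw [Finset.sum_mul]
    rw [Finset.sum_congr rfl fun s _ => hAs s, Finset.sum_const, hcard_univ, smul_eq_mul]
  constructor
  · -- upper bound
    rw [hN]
    calc (univ.biUnion A).card * W ≤ (∑ s, (A s).card) * W :=
          Nat.mul_le_mul_right _ (Finset.card_biUnion_le)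
      _ = 4*n*F := hsum
  · -- lower bound via bonferroni
    have hbon := bonferroni (univ : Finset (Bool × Bool × Fin n)) A
    have hpair : ∀ s t : Bool × Bool × Fin n, s ≠ t →
        ((A s) ∩ (A t)).card * W * Q ≤ F := by
      intro s t hst
      have he : (A s) ∩ (A t) =
          univ.filter (fun g => IsEquiSquare n g ∧ LineP s g ∧ LineP t g) := by
        ext g
        simp only [mem_inter, mem_filter, hA, mem_univ, true_and]
        tauto
      rw [he, ← natcard_filter]
      exact card_pair_le hn s t hst
    have hpairs : (∑ s, ∑ t ∈ univ.erase s, ((A s) ∩ (A t)).card) * W * Q ≤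
        16*n^2*F := by
      rw [Finset.sum_mul, Finset.sum_mul]
      calc ∑ s, (∑ t ∈ univ.erase s, ((A s) ∩ (A t)).card) * W * Q
          = ∑ s, ∑ t ∈ univ.erase s, ((A s) ∩ (A t)).card * W * Q := by
            refine Finset.sum_congr rfl fun s _ => ?_
            rw [Finset.sum_mul, Finset.sum_mul]
        _ ≤ ∑ s : Bool × Bool × Fin n, ∑ t ∈ univ.erase s, F := by
            refine Finset.sum_le_sum fun s _ => Finset.sum_le_sum fun t ht => ?_
            exact hpair s t (Ne.symm (Finset.ne_of_mem_erase ht))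
        _ = ∑ s : Bool × Bool × Fin n, ((univ.erase s).card) * F := by
            refine Finset.sum_congr rfl fun s _ => by rw [Finset.sum_const, smul_eq_mul]
        _ ≤ ∑ s : Bool × Bool × Fin n, (4*n) * F := by
            refine Finset.sum_le_sum fun s _ => ?_
            have : (univ.erase s).card ≤ 4*n := by
              calc (univ.erase s).card ≤ univ.card := Finset.card_le_card (Finset.erase_subset _ _)
                _ = 4*n := hcard_univ
            exact Nat.mul_le_mul_right _ this
        _ = (4*n) * ((4*n) * F) := by rw [Finset.sum_const, hcard_univ, smul_eq_mul]
        _ ≤ 16*n^2*F := by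
            have : 4*n*(4*n*F) = 16*n^2*F := by ring
            omega
    -- multiply bonferroni by W*Q
    have h1 : (∑ s, (A s).card) * W * Q ≤
        ((univ.biUnion A).card + ∑ s, ∑ t ∈ univ.erase s, ((A s) ∩ (A t)).card) * W * Q :=
      Nat.mul_le_mul_right _ (Nat.mul_le_mul_right _ hbon)
    rw [hsum] at h1
    rw [hN]
    calc 4*n*F*Q ≤
        ((univ.biUnion A).card + ∑ s, ∑ t ∈ univ.erase s, ((A s) ∩ (A t)).card) * W * Q := h1
      _ = (univ.biUnion A).card * W * Q +
          (∑ s, ∑ t ∈ univ.erase s, ((A s) ∩ (A t)).card) * W * Q := by ring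
      _ ≤ (univ.biUnion A).card * W * Q + 16*n^2*F := by
          have := hpairs
          omega

/-- `|Σ_n| ∼ 4n·(n²−n)!/((n−1)!)^n` as `n → ∞`: the ratio tends to `1`. -/
theorem card_consecEquiSquares_asymp :
    Filter.Tendsto
      (fun n : ℕ =>
        (Nat.card {g : Fin n → Fin n → Fin n // IsConsecEquiSquare n g} : ℝ) *
            ((n - 1)! : ℝ) ^ n / (4 * (n : ℝ) * ((n ^ 2 - n)! : ℝ)))
      Filter.atTop (nhds 1) := by
  have hg : Filter.Tendsto (fun n : ℕ => 1 - 16/(n:ℝ)) Filter.atTop (nhds 1) := by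
    have h0 := tendsto_const_div_atTop_nhds_zero_nat (16:ℝ)
    have := Filter.Tendsto.sub (tendsto_const_nhds (x := (1:ℝ))) h0
    simpa using this
  refine tendsto_of_tendsto_of_tendsto_of_le_of_le' hg tendsto_const_nhds ?_ ?_
  · -- lower bound
    filter_upwards [Filter.eventually_ge_atTop 4] with n hn4
    have hn2 : 2 ≤ n := by omega
    have hb := (main_bounds hn2).2
    have hc := nsq_le n hn4
    set N := Nat.card {g : Fin n → Fin n → Fin n // IsConsecEquiSquare n g} with hNdef
    have hFpos : (0:ℝ) < ((n^2-n)! : ℝ) := by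
      exact_mod_cast Nat.factorial_pos _
    have hnpos : (0:ℝ) < (n:ℝ) := by
      have : 0 < n := by omega
      exact_mod_cast this
    have hQpos : (0:ℝ) < ((n-1:ℕ):ℝ)^(n-1) := by
      have : 0 < n - 1 := by omega
      positivity
    have hD : (0:ℝ) < 4 * (n : ℝ) * ((n ^ 2 - n)! : ℝ) := by positivity
    rw [le_div_iff₀ hD]
    have key : (1 - 16/(n:ℝ)) * (4 * (n:ℝ) * ((n ^ 2 - n)! : ℝ)) =
        4 * (n:ℝ) * ((n ^ 2 - n)! : ℝ) - 64 * ((n ^ 2 - n)! : ℝ) := by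
      field_simp
      ring
    rw [key]
    have hbR : 4 * (n:ℝ) * ((n ^ 2 - n)! : ℝ) * ((n-1:ℕ):ℝ)^(n-1) ≤
        (N:ℝ) * ((n - 1)! : ℝ)^n * ((n-1:ℕ):ℝ)^(n-1) +
          16 * (n:ℝ)^2 * ((n ^ 2 - n)! : ℝ) := by
      exact_mod_cast hb
    have hcR : ((n:ℝ))^2 ≤ 4 * ((n-1:ℕ):ℝ)^(n-1) := by exact_mod_cast hc
    have hstep : (4 * (n:ℝ) * ((n ^ 2 - n)! : ℝ) - 64 * ((n ^ 2 - n)! : ℝ)) *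
        ((n-1:ℕ):ℝ)^(n-1) ≤ ((N:ℝ) * ((n - 1)! : ℝ)^n) * ((n-1:ℕ):ℝ)^(n-1) := by
      nlinarith [hbR, mul_le_mul_of_nonneg_right hcR hFpos.le]
    exact le_of_mul_le_mul_right hstep hQpos
  · -- upper bound
    filter_upwards [Filter.eventually_ge_atTop 2] with n hn2
    have hb := (main_bounds hn2).1
    have hFpos : (0:ℝ) < ((n^2-n)! : ℝ) := by exact_mod_cast Nat.factorial_pos _
    have hnpos : (0:ℝ) < (n:ℝ) := by
      have : 0 < n := by omega
      exact_mod_cast this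
    have hD : (0:ℝ) < 4 * (n : ℝ) * ((n ^ 2 - n)! : ℝ) := by positivity
    rw [div_le_one hD]
    exact_mod_cast hb
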